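/- Let G₃ = ⟨g₁, g₂, g₃ ∣ g₂g₁ = g₁^{-1}g₂, g₃g₁ = g₁^{-1}g₃, g₃g₂ = g₁g₂g₃⟩. A map ψ : G₃ → G₃ is an automorphism if and only if there exist a, e, f, h, i ∈ ℤ with e·i − f·h = ±1 such that ψ(g₂) = g₁^{d₂} g₂^{e} g₃^{f} and ψ(g₃) = g₁^{d₃} g₂^{h} g₃^{i}, where the parities and the values of ψ(g₁), d₂, d₃ fall into one of four families: (α) ψ(g₁) = g₁, e, i even, f, h odd, d₂ = a, d₃ = a+1; (β) ψ(g₁) = g₁^{-1}, e, i even, f, h odd, d₂ = d₃ = a; (γ) ψ(g₁) = g₁, e, i odd, f, h even, d₂ = d₃ = a; (δ) ψ(g₁) = g₁^{-1}, e, i odd, f, h even, d₂ = a, d₃ = a−1. -/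

import Mathlib

/-- The relators `g₂g₁g₂⁻¹g₁`, `g₃g₁g₃⁻¹g₁`, `g₃g₂g₃⁻¹g₂⁻¹g₁⁻¹` presenting the
group `⟨g₁, g₂, g₃ ∣ g₂g₁ = g₁⁻¹g₂, g₃g₁ = g₁⁻¹g₃, g₃g₂ = g₁g₂g₃⟩`. -/
def polyZRelsB1 : Set (FreeGroup (Fin 3)) :=
  {FreeGroup.of 1 * FreeGroup.of 0 * (FreeGroup.of 1)⁻¹ * FreeGroup.of 0,
   FreeGroup.of 2 * FreeGroup.of 0 * (FreeGroup.of 2)⁻¹ * FreeGroup.of 0,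
   FreeGroup.of 2 * FreeGroup.of 1 * (FreeGroup.of 2)⁻¹ * (FreeGroup.of 1)⁻¹ * (FreeGroup.of 0)⁻¹}

namespace PZ
def u (n : ℤ) : ℤ := if Even n then 1 else -1
def ee (m n : ℤ) : ℤ := if Even m ∨ Even n then 0 else 1
@[ext] structure M where
  x : ℤ
  y : ℤ
  z : ℤ
deriving DecidableEq

@[simp] lemma u_add (m n : ℤ) : u (m + n) = u m * u n := by
  unfold u; by_cases h : Even m <;> by_cases h' : Even n <;>
    simp [h, h', parity_simps]
namespace M
instance : Mul M := ⟨fun a b => ⟨a.x + u (a.y + a.z) * b.x + u a.y * ee a.z b.y, a.y + b.y, a.z + b.z⟩⟩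
instance : One M := ⟨⟨0,0,0⟩⟩
instance : Inv M := ⟨fun a => ⟨-(u (a.y + a.z)) * a.x + ee a.z a.y, -a.y, -a.z⟩⟩
@[simp] lemma mul_x (a b : M) : (a*b).x = a.x + u (a.y + a.z) * b.x + u a.y * ee a.z b.y := rfl
@[simp] lemma mul_y (a b : M) : (a*b).y = a.y + b.y := rfl
@[simp] lemma mul_z (a b : M) : (a*b).z = a.z + b.z := rfl
@[simp] lemma one_x : (1 : M).x = 0 := rfl
@[simp] lemma one_y : (1 : M).y = 0 := rfl
@[simp] lemma one_z : (1 : M).z = 0 := rfl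
@[simp] lemma inv_x (a : M) : (a⁻¹).x = -(u (a.y + a.z)) * a.x + ee a.z a.y := rfl
@[simp] lemma inv_y (a : M) : (a⁻¹).y = -a.y := rfl
@[simp] lemma inv_z (a : M) : (a⁻¹).z = -a.z := rfl
instance : Group M where
  mul_assoc a b c := by
    ext <;> simp only [mul_x, mul_y, mul_z]
    · by_cases h1 : Even a.y <;> by_cases h2 : Even a.z <;> by_cases h3 : Even b.y <;>
      by_cases h4 : Even b.z <;> by_cases h5 : Even c.y <;>
      simp [u, ee, h1, h2, h3, h4, h5, parity_simps] <;> ring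
    · ring
    · ring
  one_mul a := by ext <;> simp [u, ee]
  mul_one a := by ext <;> simp [u, ee]
  inv_mul_cancel a := by
    ext <;> simp only [mul_x, mul_y, mul_z, inv_x, inv_y, inv_z, one_x, one_y, one_z]
    · by_cases h1 : Even a.y <;> by_cases h2 : Even a.z <;>
      simp [u, ee, h1, h2, parity_simps] <;> ring
    · ring
    · ring

lemma zpow_y (A : M) : ∀ n : ℤ, (A^n).y = n * A.y := by
  intro n
  induction n using Int.induction_on with
  | zero => simp
  | succ k ih => rw [zpow_add_one]; simp only [mul_y, mul_z, ih]; ring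
  | pred k ih => rw [zpow_sub_one]; simp only [mul_y, mul_z, inv_y, inv_z, ih]; ring

lemma zpow_z (A : M) : ∀ n : ℤ, (A^n).z = n * A.z := by
  intro n
  induction n using Int.induction_on with
  | zero => simp
  | succ k ih => rw [zpow_add_one]; simp only [mul_y, mul_z, ih]; ring
  | pred k ih => rw [zpow_sub_one]; simp only [mul_y, mul_z, inv_y, inv_z, ih]; ring

lemma zpow_g1 (p : ℤ) : ∀ n : ℤ, (⟨p,0,0⟩ : M)^n = ⟨p*n,0,0⟩ := by
  intro n
  induction n using Int.induction_on with
  | zero => ext <;> simp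
  | succ k ih => rw [zpow_add_one, ih]; ext <;> simp [u, ee] <;> ring
  | pred k ih => rw [zpow_sub_one, ih]; ext <;> simp [u, ee] <;> ring

lemma zpow_g2 : ∀ n : ℤ, (⟨0,1,0⟩ : M)^n = ⟨0,n,0⟩ := by
  intro n
  induction n using Int.induction_on with
  | zero => ext <;> simp
  | succ k ih => rw [zpow_add_one, ih]; ext <;> simp [u, ee] <;> ring
  | pred k ih => rw [zpow_sub_one, ih]; ext <;> simp [u, ee] <;> ring

lemma zpow_g3 : ∀ n : ℤ, (⟨0,0,1⟩ : M)^n = ⟨0,0,n⟩ := by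
  intro n
  induction n using Int.induction_on with
  | zero => ext <;> simp
  | succ k ih => rw [zpow_add_one, ih]; ext <;> simp [u, ee] <;> ring
  | pred k ih => rw [zpow_sub_one, ih]; ext <;> simp [u, ee] <;> ring

lemma normal_form (a : M) : a = (⟨1,0,0⟩ : M)^a.x * (⟨0,1,0⟩:M)^a.y * (⟨0,0,1⟩:M)^a.z := by
  rw [zpow_g1, zpow_g2, zpow_g3]
  ext <;> simp [u, ee]

lemma nf (X Y Z : ℤ) : (⟨X,Y,Z⟩ : M) = (⟨1,0,0⟩ : M)^X * (⟨0,1,0⟩:M)^Y * (⟨0,0,1⟩:M)^Z :=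
  normal_form ⟨X,Y,Z⟩

-- relations hold in M
lemma relM1 : (⟨0,1,0⟩:M) * ⟨1,0,0⟩ = (⟨1,0,0⟩:M)⁻¹ * ⟨0,1,0⟩ := by ext <;> simp [u, ee] <;> decide
lemma relM2 : (⟨0,0,1⟩:M) * ⟨1,0,0⟩ = (⟨1,0,0⟩:M)⁻¹ * ⟨0,0,1⟩ := by ext <;> simp [u, ee] <;> decide
lemma relM3 : (⟨0,0,1⟩:M) * ⟨0,1,0⟩ = (⟨1,0,0⟩:M) * ⟨0,1,0⟩ * ⟨0,0,1⟩ := by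
  ext <;> simp [u, ee] <;> decide

lemma inv_g1 : (⟨1,0,0⟩:M)⁻¹ = ⟨-1,0,0⟩ := by ext <;> simp [u, ee]

-- helper lemmas toward classification (append to t2 content)
lemma g1_comm : (⟨1,0,0⟩:M) = ⟨0,0,1⟩ * ⟨0,1,0⟩ * (⟨0,0,1⟩:M)⁻¹ * (⟨0,1,0⟩:M)⁻¹ := by
  ext <;> simp [u, ee]

lemma g1_image (φ : M →* M) : φ ⟨1,0,0⟩ = ⟨(φ ⟨1,0,0⟩).x, 0, 0⟩ := by
  ext
  · rfl
  · rw [g1_comm]; simp only [map_mul, map_inv, mul_y, inv_y]; ring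
  · rw [g1_comm]; simp only [map_mul, map_inv, mul_z, inv_z]; ring

lemma img_y (φ : M →* M) (h0 : (φ ⟨1,0,0⟩).y = 0) (w : M) :
    (φ w).y = w.y * (φ ⟨0,1,0⟩).y + w.z * (φ ⟨0,0,1⟩).y := by
  conv_lhs => rw [normal_form w]
  simp only [map_mul, map_zpow, mul_y, zpow_y, h0]
  ring

lemma img_z (φ : M →* M) (h0 : (φ ⟨1,0,0⟩).z = 0) (w : M) :
    (φ w).z = w.y * (φ ⟨0,1,0⟩).z + w.z * (φ ⟨0,0,1⟩).z := by
  conv_lhs => rw [normal_form w]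
  simp only [map_mul, map_zpow, mul_z, zpow_z, h0]
  ring
lemma bijective_of (φ : M →* M) (p : ℤ) (hp : p = 1 ∨ p = -1)
    (hd : (φ ⟨0,1,0⟩).y * (φ ⟨0,0,1⟩).z - (φ ⟨0,1,0⟩).z * (φ ⟨0,0,1⟩).y = 1 ∨
          (φ ⟨0,1,0⟩).y * (φ ⟨0,0,1⟩).z - (φ ⟨0,1,0⟩).z * (φ ⟨0,0,1⟩).y = -1)
    (h1 : φ ⟨1,0,0⟩ = ⟨p,0,0⟩) : Function.Bijective φ := by
  set e := (φ ⟨0,1,0⟩).y with he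
  set f := (φ ⟨0,1,0⟩).z with hf
  set h := (φ ⟨0,0,1⟩).y with hh
  set i := (φ ⟨0,0,1⟩).z with hi
  have h0y : (φ ⟨1,0,0⟩).y = 0 := by rw [h1]
  have h0z : (φ ⟨1,0,0⟩).z = 0 := by rw [h1]
  have hdd : (e * i - f * h) * (e * i - f * h) = 1 := by
    rcases hd with hd | hd <;> rw [hd] <;> norm_num
  constructor
  · rw [injective_iff_map_eq_one]
    intro m hm
    have hy : m.y * e + m.z * h = 0 := by
      have := img_y φ h0y m; rw [hm] at this; simpa using this.symm
    have hz : m.y * f + m.z * i = 0 := by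
      have := img_z φ h0z m; rw [hm] at this; simpa using this.symm
    have hy0 : m.y * (e * i - f * h) = 0 := by linear_combination i * hy - h * hz
    have hz0 : m.z * (e * i - f * h) = 0 := by linear_combination e * hz - f * hy
    have hmy : m.y = 0 := by rcases hd with hd | hd <;> rw [hd] at hy0 <;> omega
    have hmz : m.z = 0 := by rcases hd with hd | hd <;> rw [hd] at hz0 <;> omega
    have hm' : m = (⟨1,0,0⟩ : M) ^ m.x := by
      rw [zpow_g1]; ext <;> simp [hmy, hmz]
    rw [hm', map_zpow, h1, zpow_g1] at hm
    have hmx : p * m.x = 0 := congrArg M.x hm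
    have hx : m.x = 0 := by rcases hp with hp | hp <;> rw [hp] at hmx <;> omega
    ext <;> simp [hmy, hmz, hx]
  · intro t
    obtain ⟨mm, nn, hmn1, hmn2⟩ : ∃ mm nn : ℤ, mm * e + nn * h = t.y ∧ mm * f + nn * i = t.z :=
      ⟨(e*i - f*h) * (t.y*i - t.z*h), (e*i - f*h) * (t.z*e - t.y*f),
        by linear_combination t.y * hdd, by linear_combination t.z * hdd⟩
    set W : M := (⟨0,1,0⟩ : M) ^ mm * (⟨0,0,1⟩ : M) ^ nn with hW
    have hWy : (φ W).y = t.y := by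
      simp only [hW, map_mul, map_zpow, mul_y, zpow_y, ← he, ← hh]
      linear_combination hmn1
    have hWz : (φ W).z = t.z := by
      simp only [hW, map_mul, map_zpow, mul_z, zpow_z, ← hf, ← hi]
      linear_combination hmn2
    refine ⟨(⟨1,0,0⟩ : M) ^ (p * (t.x - (φ W).x)) * W, ?_⟩
    rw [map_mul, map_zpow, h1, zpow_g1]
    have hpp : p * (p * (t.x - (φ W).x)) = t.x - (φ W).x := by
      rcases hp with hp | hp <;> rw [hp] <;> ring
    ext
    · simp [u, ee, hpp]
    · simp [hWy]
    · simp [hWz]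
@[simp] lemma ee_zero_left (n : ℤ) : ee 0 n = 0 := by simp [ee]
@[simp] lemma ee_zero_right (n : ℤ) : ee n 0 = 0 := by simp [ee]
@[simp] lemma u_zero' : u 0 = 1 := by simp [u]

lemma classify (φ : M →* M) (hb : Function.Bijective φ) :
    ∃ a e f h i : ℤ, (e * i - f * h = 1 ∨ e * i - f * h = -1) ∧
      ((φ ⟨1,0,0⟩ = ⟨1,0,0⟩ ∧ Even e ∧ Even i ∧ Odd f ∧ Odd h ∧
          φ ⟨0,1,0⟩ = ⟨a,e,f⟩ ∧ φ ⟨0,0,1⟩ = ⟨a+1,h,i⟩) ∨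
       (φ ⟨1,0,0⟩ = ⟨-1,0,0⟩ ∧ Even e ∧ Even i ∧ Odd f ∧ Odd h ∧
          φ ⟨0,1,0⟩ = ⟨a,e,f⟩ ∧ φ ⟨0,0,1⟩ = ⟨a,h,i⟩) ∨
       (φ ⟨1,0,0⟩ = ⟨1,0,0⟩ ∧ Odd e ∧ Odd i ∧ Even f ∧ Even h ∧
          φ ⟨0,1,0⟩ = ⟨a,e,f⟩ ∧ φ ⟨0,0,1⟩ = ⟨a,h,i⟩) ∨
       (φ ⟨1,0,0⟩ = ⟨-1,0,0⟩ ∧ Odd e ∧ Odd i ∧ Even f ∧ Even h ∧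
          φ ⟨0,1,0⟩ = ⟨a,e,f⟩ ∧ φ ⟨0,0,1⟩ = ⟨a-1,h,i⟩)) := by
  have hg1 := g1_image φ
  set p := (φ ⟨1,0,0⟩).x with hpdef
  -- p = ± 1
  have hp : p = 1 ∨ p = -1 := by
    set σ := MulEquiv.ofBijective φ hb with hσ
    have hq := g1_image σ.symm.toMonoidHom
    set q := (σ.symm.toMonoidHom ⟨1,0,0⟩).x with hqdef
    have h2 : φ (σ.symm ⟨1,0,0⟩) = ⟨1,0,0⟩ := σ.apply_symm_apply ⟨1,0,0⟩
    have h3 : (σ.symm ⟨1,0,0⟩ : M) = (⟨1,0,0⟩ : M) ^ q := by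
      rw [zpow_g1]
      have : σ.symm.toMonoidHom ⟨1,0,0⟩ = (⟨q,0,0⟩ : M) := by rw [hq]
      simpa using this
    rw [h3, map_zpow, hg1, zpow_g1] at h2
    have : p * q = 1 := by
      have := congrArg M.x h2; simpa using this
    exact Int.isUnit_iff.mp (IsUnit.of_mul_eq_one q this)
  have h0y : (φ ⟨1,0,0⟩).y = 0 := by rw [hg1]
  have h0z : (φ ⟨1,0,0⟩).z = 0 := by rw [hg1]
  -- relation 1 : parities of B
  have hR1 : φ ⟨0,1,0⟩ * φ ⟨1,0,0⟩ = (φ ⟨1,0,0⟩)⁻¹ * φ ⟨0,1,0⟩ := by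
    rw [← map_inv, ← map_mul, ← map_mul, relM1]
  rw [hg1] at hR1
  have e1 := congrArg M.x hR1
  simp only [mul_x, inv_x, mul_y, mul_z, inv_y, inv_z, ee_zero_left, ee_zero_right,
    add_zero, neg_zero, zero_add, mul_zero, u_zero', one_mul, mul_one, neg_mul] at e1
  -- e1 : B.x + u (B.y + B.z) * p = -p + B.x  (roughly)
  have hef : ¬ Even ((φ ⟨0,1,0⟩).y + (φ ⟨0,1,0⟩).z) := by
    intro hE
    rw [u, if_pos hE] at e1
    rcases hp with hp' | hp' <;> rw [hp'] at e1 <;> omega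
  have hu1 : u ((φ ⟨0,1,0⟩).y + (φ ⟨0,1,0⟩).z) = -1 := by rw [u, if_neg hef]
  -- relation 2 : parities of C
  have hR2 : φ ⟨0,0,1⟩ * φ ⟨1,0,0⟩ = (φ ⟨1,0,0⟩)⁻¹ * φ ⟨0,0,1⟩ := by
    rw [← map_inv, ← map_mul, ← map_mul, relM2]
  rw [hg1] at hR2
  have e2 := congrArg M.x hR2
  simp only [mul_x, inv_x, mul_y, mul_z, inv_y, inv_z, ee_zero_left, ee_zero_right,
    add_zero, neg_zero, zero_add, mul_zero, u_zero', one_mul, mul_one, neg_mul] at e2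
  have hhi : ¬ Even ((φ ⟨0,0,1⟩).y + (φ ⟨0,0,1⟩).z) := by
    intro hE
    rw [u, if_pos hE] at e2
    rcases hp with hp' | hp' <;> rw [hp'] at e2 <;> omega
  have hu2 : u ((φ ⟨0,0,1⟩).y + (φ ⟨0,0,1⟩).z) = -1 := by rw [u, if_neg hhi]
  -- relation 3 : key equation
  have hR3 : φ ⟨0,0,1⟩ * φ ⟨0,1,0⟩ = φ ⟨1,0,0⟩ * φ ⟨0,1,0⟩ * φ ⟨0,0,1⟩ := by
    rw [← map_mul, ← map_mul, ← map_mul, relM3]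
  rw [hg1] at hR3
  have key := congrArg M.x hR3
  simp only [mul_x, inv_x, mul_y, mul_z, inv_y, inv_z, ee_zero_left, ee_zero_right,
    add_zero, neg_zero, zero_add, mul_zero, u_zero', one_mul, mul_one, neg_mul,
    hu1, hu2] at key
  -- determinant
  obtain ⟨w1, hw1⟩ := hb.2 ⟨0,1,0⟩
  obtain ⟨w2, hw2⟩ := hb.2 ⟨0,0,1⟩
  have A1 : w1.y * (φ ⟨0,1,0⟩).y + w1.z * (φ ⟨0,0,1⟩).y = 1 := by
    have := img_y φ h0y w1; rw [hw1] at this; simpa using this.symm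
  have A2 : w1.y * (φ ⟨0,1,0⟩).z + w1.z * (φ ⟨0,0,1⟩).z = 0 := by
    have := img_z φ h0z w1; rw [hw1] at this; simpa using this.symm
  have A3 : w2.y * (φ ⟨0,1,0⟩).y + w2.z * (φ ⟨0,0,1⟩).y = 0 := by
    have := img_y φ h0y w2; rw [hw2] at this; simpa using this.symm
  have A4 : w2.y * (φ ⟨0,1,0⟩).z + w2.z * (φ ⟨0,0,1⟩).z = 1 := by
    have := img_z φ h0z w2; rw [hw2] at this; simpa using this.symm
  have hdetmul : ((φ ⟨0,1,0⟩).y * (φ ⟨0,0,1⟩).z - (φ ⟨0,1,0⟩).z * (φ ⟨0,0,1⟩).y) *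
      (w1.y * w2.z - w1.z * w2.y) = 1 := by
    linear_combination (w2.y * (φ ⟨0,1,0⟩).z + w2.z * (φ ⟨0,0,1⟩).z) * A1 -
      (w2.y * (φ ⟨0,1,0⟩).y + w2.z * (φ ⟨0,0,1⟩).y) * A2 + A4
  have hdet := Int.isUnit_iff.mp (IsUnit.of_mul_eq_one _ hdetmul)
  refine ⟨(φ ⟨0,1,0⟩).x, (φ ⟨0,1,0⟩).y, (φ ⟨0,1,0⟩).z, (φ ⟨0,0,1⟩).y, (φ ⟨0,0,1⟩).z,
    hdet, ?_⟩
  have hB : φ ⟨0,1,0⟩ = ⟨(φ ⟨0,1,0⟩).x, (φ ⟨0,1,0⟩).y, (φ ⟨0,1,0⟩).z⟩ := by ext <;> rfl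
  by_cases hBy : Even (φ ⟨0,1,0⟩).y <;> by_cases hCy : Even (φ ⟨0,0,1⟩).y
  · -- B.y even, C.y even : impossible
    exfalso
    have hBz : Odd (φ ⟨0,1,0⟩).z := by
      rw [Int.odd_iff]; rw [Int.even_add, Int.even_iff, Int.even_iff] at hef
      rw [Int.even_iff] at hBy; omega
    have hCz : Odd (φ ⟨0,0,1⟩).z := by
      rw [Int.odd_iff]; rw [Int.even_add, Int.even_iff, Int.even_iff] at hhi
      rw [Int.even_iff] at hCy; omega
    have v1 : ee (φ ⟨0,0,1⟩).z (φ ⟨0,1,0⟩).y = 0 := by rw [ee, if_pos (Or.inr hBy)]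
    have v2 : ee (φ ⟨0,1,0⟩).z (φ ⟨0,0,1⟩).y = 0 := by rw [ee, if_pos (Or.inr hCy)]
    rw [v1, v2] at key
    simp only [mul_zero, add_zero] at key
    rcases hp with hp' | hp' <;> rw [hp'] at key <;> omega
  · -- B.y even, C.y odd : cases α / β
    have hBz : Odd (φ ⟨0,1,0⟩).z := by
      rw [Int.odd_iff]; rw [Int.even_add, Int.even_iff, Int.even_iff] at hef
      rw [Int.even_iff] at hBy; omega
    have hCz : Even (φ ⟨0,0,1⟩).z := by
      rw [Int.even_iff]; rw [Int.even_add, Int.even_iff, Int.even_iff] at hhi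
      rw [Int.not_even_iff] at hCy; omega
    have hCyo : Odd (φ ⟨0,0,1⟩).y := Int.not_even_iff_odd.mp hCy
    have v1 : ee (φ ⟨0,0,1⟩).z (φ ⟨0,1,0⟩).y = 0 := by rw [ee, if_pos (Or.inr hBy)]
    have v2 : ee (φ ⟨0,1,0⟩).z (φ ⟨0,0,1⟩).y = 1 := by
      rw [ee, if_neg (by push_neg; exact ⟨Int.not_even_iff_odd.mpr hBz, hCy⟩)]
    have v3 : u (φ ⟨0,1,0⟩).y = 1 := by rw [u, if_pos hBy]
    rw [v1, v2, v3] at key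
    simp only [mul_zero, add_zero, mul_one, one_mul] at key
    rcases hp with hp' | hp'
    · refine Or.inl ⟨by rw [hg1, hp'], hBy, hCz, hBz, hCyo, hB, ?_⟩
      rw [hp'] at key; ext
      · simp only []; omega
      · rfl
      · rfl
    · refine Or.inr (Or.inl ⟨by rw [hg1, hp'], hBy, hCz, hBz, hCyo, hB, ?_⟩)
      rw [hp'] at key; ext
      · simp only []; omega
      · rfl
      · rfl
  · -- B.y odd, C.y even : cases γ / δ
    have hBz : Even (φ ⟨0,1,0⟩).z := by
      rw [Int.even_iff]; rw [Int.even_add, Int.even_iff, Int.even_iff] at hef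
      rw [Int.not_even_iff] at hBy; omega
    have hCz : Odd (φ ⟨0,0,1⟩).z := by
      rw [Int.odd_iff]; rw [Int.even_add, Int.even_iff, Int.even_iff] at hhi
      rw [Int.even_iff] at hCy; omega
    have hByo : Odd (φ ⟨0,1,0⟩).y := Int.not_even_iff_odd.mp hBy
    have v1 : ee (φ ⟨0,0,1⟩).z (φ ⟨0,1,0⟩).y = 1 := by
      rw [ee, if_neg (by push_neg; exact ⟨Int.not_even_iff_odd.mpr hCz, hBy⟩)]
    have v2 : ee (φ ⟨0,1,0⟩).z (φ ⟨0,0,1⟩).y = 0 := by rw [ee, if_pos (Or.inr hCy)]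
    have v3 : u (φ ⟨0,0,1⟩).y = 1 := by rw [u, if_pos hCy]
    rw [v1, v2, v3] at key
    simp only [mul_zero, add_zero, mul_one, one_mul] at key
    rcases hp with hp' | hp'
    · refine Or.inr (Or.inr (Or.inl ⟨by rw [hg1, hp'], hByo, hCz, hBz, hCy, hB, ?_⟩))
      rw [hp'] at key; ext
      · simp only []; omega
      · rfl
      · rfl
    · refine Or.inr (Or.inr (Or.inr ⟨by rw [hg1, hp'], hByo, hCz, hBz, hCy, hB, ?_⟩))
      rw [hp'] at key; ext
      · simp only []; omega
      · rfl
      · rfl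
  · -- B.y odd, C.y odd : impossible
    exfalso
    have hBz : Even (φ ⟨0,1,0⟩).z := by
      rw [Int.even_iff]; rw [Int.even_add, Int.even_iff, Int.even_iff] at hef
      rw [Int.not_even_iff] at hBy; omega
    have hCz : Even (φ ⟨0,0,1⟩).z := by
      rw [Int.even_iff]; rw [Int.even_add, Int.even_iff, Int.even_iff] at hhi
      rw [Int.not_even_iff] at hCy; omega
    have v1 : ee (φ ⟨0,0,1⟩).z (φ ⟨0,1,0⟩).y = 0 := by rw [ee, if_pos (Or.inl hCz)]
    have v2 : ee (φ ⟨0,1,0⟩).z (φ ⟨0,0,1⟩).y = 0 := by rw [ee, if_pos (Or.inl hBz)]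
    rw [v1, v2] at key
    simp only [mul_zero, add_zero] at key
    rcases hp with hp' | hp' <;> rw [hp'] at key <;> omega
end M

section Gside
open PresentedGroup

abbrev G := PresentedGroup polyZRelsB1

def ga : G := PresentedGroup.of 0
def gb : G := PresentedGroup.of 1
def gc : G := PresentedGroup.of 2

lemma relG (r : FreeGroup (Fin 3)) (hr : r ∈ polyZRelsB1) :
    PresentedGroup.mk polyZRelsB1 r = 1 :=
  (QuotientGroup.eq_one_iff r).mpr (Subgroup.subset_normalClosure hr)

lemma rel1 : gb * ga * gb⁻¹ * ga = 1 := by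
  have := relG _ (Set.mem_insert _ _)
  simpa [map_mul, map_inv, ga, gb, gc, PresentedGroup.of] using this

lemma rel2 : gc * ga * gc⁻¹ * ga = 1 := by
  have := relG (FreeGroup.of 2 * FreeGroup.of 0 * (FreeGroup.of 2)⁻¹ * FreeGroup.of 0)
    (by right; left; rfl)
  simpa [map_mul, map_inv, ga, gb, gc, PresentedGroup.of] using this

lemma rel3 : gc * gb * gc⁻¹ * gb⁻¹ * ga⁻¹ = 1 := by
  have := relG (FreeGroup.of 2 * FreeGroup.of 1 * (FreeGroup.of 2)⁻¹ * (FreeGroup.of 1)⁻¹ *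
    (FreeGroup.of 0)⁻¹) (by right; right; rfl)
  simpa [map_mul, map_inv, ga, gb, gc, PresentedGroup.of] using this

lemma b_conj_a : gb * ga * gb⁻¹ = ga⁻¹ := mul_eq_one_iff_eq_inv.mp rel1
lemma c_conj_a : gc * ga * gc⁻¹ = ga⁻¹ := mul_eq_one_iff_eq_inv.mp rel2
lemma c_conj_b : gc * gb * gc⁻¹ = ga * gb := by
  have h := rel3
  have h2 : gc * gb * gc⁻¹ * gb⁻¹ = ga := by
    have := mul_eq_one_iff_eq_inv.mp h
    rwa [inv_inv] at this
  calc gc * gb * gc⁻¹ = (gc * gb * gc⁻¹ * gb⁻¹) * gb := by group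
  _ = ga * gb := by rw [h2]

-- commutation with powers of a
lemma b_az (x : ℤ) : gb * ga ^ x = ga ^ (-x) * gb := by
  have h : gb * ga ^ x * gb⁻¹ = ga ^ (-x) := by
    have := map_zpow (MulAut.conj gb) ga x
    simp only [MulAut.conj_apply] at this
    rw [this, b_conj_a, inv_zpow, ← zpow_neg]
  calc gb * ga ^ x = (gb * ga ^ x * gb⁻¹) * gb := by group
  _ = ga ^ (-x) * gb := by rw [h]

lemma c_az (x : ℤ) : gc * ga ^ x = ga ^ (-x) * gc := by
  have h : gc * ga ^ x * gc⁻¹ = ga ^ (-x) := by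
    have := map_zpow (MulAut.conj gc) ga x
    simp only [MulAut.conj_apply] at this
    rw [this, c_conj_a, inv_zpow, ← zpow_neg]
  calc gc * ga ^ x = (gc * ga ^ x * gc⁻¹) * gc := by group
  _ = ga ^ (-x) * gc := by rw [h]

lemma binv_az (x : ℤ) : gb⁻¹ * ga ^ x = ga ^ (-x) * gb⁻¹ := by
  have := b_az (-x)
  rw [neg_neg] at this
  calc gb⁻¹ * ga ^ x = gb⁻¹ * (gb * ga ^ (-x)) * gb⁻¹ := by rw [this]; group
  _ = ga ^ (-x) * gb⁻¹ := by group

lemma cinv_az (x : ℤ) : gc⁻¹ * ga ^ x = ga ^ (-x) * gc⁻¹ := by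
  have := c_az (-x)
  rw [neg_neg] at this
  calc gc⁻¹ * ga ^ x = gc⁻¹ * (gc * ga ^ (-x)) * gc⁻¹ := by rw [this]; group
  _ = ga ^ (-x) * gc⁻¹ := by group

lemma u_succ (n : ℤ) : u (n + 1) = -u n := by
  by_cases h : Even n <;> simp [u, h, parity_simps]

lemma u_pred (n : ℤ) : u (n - 1) = -u n := by
  by_cases h : Even n <;> simp [u, h, parity_simps]

lemma bz_az (y : ℤ) : ∀ x : ℤ, gb ^ y * ga ^ x = ga ^ (u y * x) * gb ^ y := by
  induction y using Int.induction_on with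
  | zero => intro x; simp [u]
  | succ k ih =>
    intro x
    have : gb ^ ((k : ℤ) + 1) = gb ^ (k : ℤ) * gb := by rw [zpow_add_one]
    rw [this, mul_assoc, b_az, ← mul_assoc, ih, mul_assoc, ← this, u_succ]
    ring_nf
  | pred k ih =>
    intro x
    have : gb ^ (-(k : ℤ) - 1) = gb ^ (-(k:ℤ)) * gb⁻¹ := by rw [zpow_sub_one]
    rw [this, mul_assoc, binv_az, ← mul_assoc, ih, mul_assoc, ← this, u_pred]
    ring_nf

lemma cz_az (z : ℤ) : ∀ x : ℤ, gc ^ z * ga ^ x = ga ^ (u z * x) * gc ^ z := by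
  induction z using Int.induction_on with
  | zero => intro x; simp [u]
  | succ k ih =>
    intro x
    have : gc ^ ((k : ℤ) + 1) = gc ^ (k : ℤ) * gc := by rw [zpow_add_one]
    rw [this, mul_assoc, c_az, ← mul_assoc, ih, mul_assoc, ← this, u_succ]
    ring_nf
  | pred k ih =>
    intro x
    have : gc ^ (-(k : ℤ) - 1) = gc ^ (-(k:ℤ)) * gc⁻¹ := by rw [zpow_sub_one]
    rw [this, mul_assoc, cinv_az, ← mul_assoc, ih, mul_assoc, ← this, u_pred]
    ring_nf

lemma c_b : gc * gb = ga * gb * gc := by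
  calc gc * gb = (gc * gb * gc⁻¹) * gc := by group
  _ = ga * gb * gc := by rw [c_conj_b]

lemma c_binv : gc * gb⁻¹ = ga * gb⁻¹ * gc := by
  have h : gc * gb⁻¹ * gc⁻¹ = gb⁻¹ * ga⁻¹ := by
    have := c_conj_b
    have h2 : gc * gb⁻¹ * gc⁻¹ = (gc * gb * gc⁻¹)⁻¹ := by group
    rw [h2, this]; group
  have h3 : gb⁻¹ * ga⁻¹ = ga * gb⁻¹ := by
    have := binv_az (-1)
    simpa using this
  calc gc * gb⁻¹ = (gc * gb⁻¹ * gc⁻¹) * gc := by group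
  _ = ga * gb⁻¹ * gc := by rw [h, h3]

lemma ee1_succ (k : ℤ) : ee 1 (k + 1) = ee 1 k + u k := by
  by_cases h : Even k <;> simp [ee, u, h, parity_simps]

lemma ee1_pred (k : ℤ) : ee 1 (k - 1) = ee 1 k + u k := by
  by_cases h : Even k <;> simp [ee, u, h, parity_simps]

lemma ee_succ_left (k y : ℤ) : ee (k + 1) y = ee k y + u k * ee 1 y := by
  by_cases h : Even k <;> by_cases h' : Even y <;> simp [ee, u, h, h', parity_simps]

lemma ee_pred_left (k y : ℤ) : ee (k - 1) y = ee k y + u k * ee 1 y := by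
  by_cases h : Even k <;> by_cases h' : Even y <;> simp [ee, u, h, h', parity_simps]

lemma c_bz : ∀ y : ℤ, gc * gb ^ y = ga ^ (ee 1 y) * gb ^ y * gc := by
  intro y
  induction y using Int.induction_on with
  | zero => simp [ee]
  | succ k ih =>
    have hb : gb ^ (k:ℤ) * ga = ga ^ (u (k:ℤ)) * gb ^ (k:ℤ) := by simpa using bz_az (k:ℤ) 1
    calc gc * gb ^ ((k:ℤ)+1) = (gc * gb ^ (k:ℤ)) * gb := by rw [zpow_add_one]; group
      _ = ga ^ ee 1 (k:ℤ) * gb ^ (k:ℤ) * gc * gb := by rw [ih]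
      _ = ga ^ ee 1 (k:ℤ) * gb ^ (k:ℤ) * (gc * gb) := by group
      _ = ga ^ ee 1 (k:ℤ) * gb ^ (k:ℤ) * (ga * gb * gc) := by rw [c_b]
      _ = ga ^ ee 1 (k:ℤ) * (gb ^ (k:ℤ) * ga) * (gb * gc) := by group
      _ = ga ^ ee 1 (k:ℤ) * (ga ^ u (k:ℤ) * gb ^ (k:ℤ)) * (gb * gc) := by rw [hb]
      _ = ga ^ (ee 1 (k:ℤ) + u (k:ℤ)) * (gb ^ (k:ℤ) * gb) * gc := by rw [zpow_add]; group
      _ = ga ^ ee 1 ((k:ℤ)+1) * gb ^ ((k:ℤ)+1) * gc := by rw [ee1_succ, zpow_add_one]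
  | pred k ih =>
    have hb : gb ^ (-(k:ℤ)) * ga = ga ^ (u (-(k:ℤ))) * gb ^ (-(k:ℤ)) := by
      simpa using bz_az (-(k:ℤ)) 1
    calc gc * gb ^ (-(k:ℤ)-1) = (gc * gb ^ (-(k:ℤ))) * gb⁻¹ := by rw [zpow_sub_one]; group
      _ = ga ^ ee 1 (-(k:ℤ)) * gb ^ (-(k:ℤ)) * gc * gb⁻¹ := by rw [ih]
      _ = ga ^ ee 1 (-(k:ℤ)) * gb ^ (-(k:ℤ)) * (gc * gb⁻¹) := by group
      _ = ga ^ ee 1 (-(k:ℤ)) * gb ^ (-(k:ℤ)) * (ga * gb⁻¹ * gc) := by rw [c_binv]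
      _ = ga ^ ee 1 (-(k:ℤ)) * (gb ^ (-(k:ℤ)) * ga) * (gb⁻¹ * gc) := by group
      _ = ga ^ ee 1 (-(k:ℤ)) * (ga ^ u (-(k:ℤ)) * gb ^ (-(k:ℤ))) * (gb⁻¹ * gc) := by rw [hb]
      _ = ga ^ (ee 1 (-(k:ℤ)) + u (-(k:ℤ))) * (gb ^ (-(k:ℤ)) * gb⁻¹) * gc := by
          rw [zpow_add]; group
      _ = ga ^ ee 1 (-(k:ℤ)-1) * gb ^ (-(k:ℤ)-1) * gc := by rw [ee1_pred, zpow_sub_one]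

lemma cinv_bz (y : ℤ) : gc⁻¹ * gb ^ y = ga ^ (ee 1 y) * gb ^ y * gc⁻¹ := by
  have key : gc * (ga ^ (ee 1 y) * gb ^ y * gc⁻¹) = gb ^ y := by
    calc gc * (ga ^ (ee 1 y) * gb ^ y * gc⁻¹)
        = (gc * ga ^ (ee 1 y)) * gb ^ y * gc⁻¹ := by group
      _ = (ga ^ (-(ee 1 y)) * gc) * gb ^ y * gc⁻¹ := by rw [c_az]
      _ = ga ^ (-(ee 1 y)) * (gc * gb ^ y) * gc⁻¹ := by group
      _ = ga ^ (-(ee 1 y)) * (ga ^ (ee 1 y) * gb ^ y * gc) * gc⁻¹ := by rw [c_bz]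
      _ = gb ^ y := by group
  calc gc⁻¹ * gb ^ y = gc⁻¹ * (gc * (ga ^ (ee 1 y) * gb ^ y * gc⁻¹)) := by rw [key]
    _ = ga ^ (ee 1 y) * gb ^ y * gc⁻¹ := by group

lemma cz_bz (z : ℤ) : ∀ y : ℤ, gc ^ z * gb ^ y = ga ^ (ee z y) * gb ^ y * gc ^ z := by
  induction z using Int.induction_on with
  | zero => intro y; simp [ee]
  | succ k ih =>
    intro y
    calc gc ^ ((k:ℤ)+1) * gb ^ y = gc ^ (k:ℤ) * (gc * gb ^ y) := by rw [zpow_add_one]; group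
      _ = gc ^ (k:ℤ) * (ga ^ (ee 1 y) * gb ^ y * gc) := by rw [c_bz]
      _ = (gc ^ (k:ℤ) * ga ^ (ee 1 y)) * gb ^ y * gc := by group
      _ = (ga ^ (u (k:ℤ) * ee 1 y) * gc ^ (k:ℤ)) * gb ^ y * gc := by rw [cz_az]
      _ = ga ^ (u (k:ℤ) * ee 1 y) * (gc ^ (k:ℤ) * gb ^ y) * gc := by group
      _ = ga ^ (u (k:ℤ) * ee 1 y) * (ga ^ (ee (k:ℤ) y) * gb ^ y * gc ^ (k:ℤ)) * gc := by
          rw [ih]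
      _ = ga ^ (ee (k:ℤ) y + u (k:ℤ) * ee 1 y) * gb ^ y * (gc ^ (k:ℤ) * gc) := by
          rw [zpow_add]; group
      _ = ga ^ (ee ((k:ℤ)+1) y) * gb ^ y * gc ^ ((k:ℤ)+1) := by rw [ee_succ_left, zpow_add_one]
  | pred k ih =>
    intro y
    calc gc ^ (-(k:ℤ)-1) * gb ^ y = gc ^ (-(k:ℤ)) * (gc⁻¹ * gb ^ y) := by rw [zpow_sub_one]; group
      _ = gc ^ (-(k:ℤ)) * (ga ^ (ee 1 y) * gb ^ y * gc⁻¹) := by rw [cinv_bz]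
      _ = (gc ^ (-(k:ℤ)) * ga ^ (ee 1 y)) * gb ^ y * gc⁻¹ := by group
      _ = (ga ^ (u (-(k:ℤ)) * ee 1 y) * gc ^ (-(k:ℤ))) * gb ^ y * gc⁻¹ := by rw [cz_az]
      _ = ga ^ (u (-(k:ℤ)) * ee 1 y) * (gc ^ (-(k:ℤ)) * gb ^ y) * gc⁻¹ := by group
      _ = ga ^ (u (-(k:ℤ)) * ee 1 y) * (ga ^ (ee (-(k:ℤ)) y) * gb ^ y * gc ^ (-(k:ℤ))) * gc⁻¹ := by
          rw [ih]
      _ = ga ^ (ee (-(k:ℤ)) y + u (-(k:ℤ)) * ee 1 y) * gb ^ y * (gc ^ (-(k:ℤ)) * gc⁻¹) := by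
          rw [zpow_add]; group
      _ = ga ^ (ee (-(k:ℤ)-1) y) * gb ^ y * gc ^ (-(k:ℤ)-1) := by rw [ee_pred_left, zpow_sub_one]
def psi : M → G := fun m => ga ^ m.x * gb ^ m.y * gc ^ m.z

lemma psi_mul (m n : M) : psi (m * n) = psi m * psi n := by
  obtain ⟨x,y,z⟩ := m; obtain ⟨x',y',z'⟩ := n
  show ga ^ (x + u (y+z) * x' + u y * ee z y') * gb ^ (y+y') * gc ^ (z+z')
      = (ga^x * gb^y * gc^z) * (ga^x' * gb^y' * gc^z')
  have hexp : x + (u y * (u z * x') + u y * ee z y') = x + u (y+z) * x' + u y * ee z y' := by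
    rw [u_add]; ring
  symm
  calc (ga^x * gb^y * gc^z) * (ga^x' * gb^y' * gc^z')
      = ga^x * gb^y * (gc^z * ga^x') * (gb^y' * gc^z') := by group
    _ = ga^x * gb^y * (ga^(u z * x') * gc^z) * (gb^y' * gc^z') := by rw [cz_az]
    _ = ga^x * (gb^y * ga^(u z * x')) * ((gc^z * gb^y') * gc^z') := by group
    _ = ga^x * (ga^(u y * (u z * x')) * gb^y) * ((ga^(ee z y') * gb^y' * gc^z) * gc^z') := by
        rw [bz_az, cz_bz]
    _ = ga^x * ga^(u y * (u z * x')) * (gb^y * ga^(ee z y')) * (gb^y' * (gc^z * gc^z')) := by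
        group
    _ = ga^x * ga^(u y * (u z * x')) * (ga^(u y * ee z y') * gb^y) * (gb^y' * (gc^z * gc^z')) := by
        rw [bz_az]
    _ = ga^(x + (u y * (u z * x') + u y * ee z y')) * (gb^(y+y') * gc^(z+z')) := by
        rw [zpow_add, zpow_add, zpow_add, zpow_add]; group
    _ = ga ^ (x + u (y+z) * x' + u y * ee z y') * gb ^ (y+y') * gc ^ (z+z') := by
        rw [hexp]; group

def psiHom : M →* G where
  toFun := psi
  map_one' := by show ga ^ (0:ℤ) * gb ^ (0:ℤ) * gc ^ (0:ℤ) = 1; simp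
  map_mul' := psi_mul

def fgen : Fin 3 → M := ![⟨1,0,0⟩, ⟨0,1,0⟩, ⟨0,0,1⟩]

lemma hrels : ∀ r ∈ polyZRelsB1, FreeGroup.lift fgen r = 1 := by
  intro r hr
  simp only [polyZRelsB1, Set.mem_insert_iff, Set.mem_singleton_iff] at hr
  rcases hr with rfl | rfl | rfl <;>
    · simp only [map_mul, map_inv, FreeGroup.lift_apply_of]
      simp only [fgen, Matrix.cons_val_zero, Matrix.cons_val_one, Matrix.head_cons,
        Matrix.cons_val_two, Matrix.tail_cons]
      decide

def Phi : G →* M := PresentedGroup.toGroup hrels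

lemma Phi_a : Phi ga = ⟨1,0,0⟩ := PresentedGroup.toGroup.of hrels
lemma Phi_b : Phi gb = ⟨0,1,0⟩ := PresentedGroup.toGroup.of hrels
lemma Phi_c : Phi gc = ⟨0,0,1⟩ := PresentedGroup.toGroup.of hrels

lemma PhiNF (X Y Z : ℤ) : Phi (ga ^ X * gb ^ Y * gc ^ Z) = (⟨X,Y,Z⟩ : M) := by
  rw [map_mul, map_mul, map_zpow, map_zpow, map_zpow, Phi_a, Phi_b, Phi_c,
    M.zpow_g1, M.zpow_g2, M.zpow_g3]
  ext <;> simp [u, ee]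

lemma Phi_psi (m : M) : Phi (psi m) = m := by
  obtain ⟨x,y,z⟩ := m
  exact PhiNF x y z

lemma psi_Phi (g : G) : psi (Phi g) = g := by
  have hcomp : psiHom.comp Phi = MonoidHom.id G := by
    apply PresentedGroup.ext
    intro x
    fin_cases x <;>
      · show psi (Phi (PresentedGroup.of _)) = PresentedGroup.of _
        rw [show (Phi (PresentedGroup.of _) : M) = _ from PresentedGroup.toGroup.of hrels]
        show ga ^ _ * gb ^ _ * gc ^ _ = _
        simp [fgen, ga, gb, gc]
  exact DFunLike.congr_fun hcomp g

lemma Phi_bij : Function.Bijective Phi :=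
  ⟨Function.LeftInverse.injective psi_Phi, Function.RightInverse.surjective Phi_psi⟩

lemma psi_bij : Function.Bijective psi :=
  ⟨Function.LeftInverse.injective Phi_psi, Function.RightInverse.surjective psi_Phi⟩
theorem Mchar (φ : M →* M) :
    Function.Bijective φ ↔ ∃ a e f h i : ℤ, (e * i - f * h = 1 ∨ e * i - f * h = -1) ∧
      ((φ ⟨1,0,0⟩ = ⟨1,0,0⟩ ∧ Even e ∧ Even i ∧ Odd f ∧ Odd h ∧
          φ ⟨0,1,0⟩ = ⟨a,e,f⟩ ∧ φ ⟨0,0,1⟩ = ⟨a+1,h,i⟩) ∨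
       (φ ⟨1,0,0⟩ = ⟨-1,0,0⟩ ∧ Even e ∧ Even i ∧ Odd f ∧ Odd h ∧
          φ ⟨0,1,0⟩ = ⟨a,e,f⟩ ∧ φ ⟨0,0,1⟩ = ⟨a,h,i⟩) ∨
       (φ ⟨1,0,0⟩ = ⟨1,0,0⟩ ∧ Odd e ∧ Odd i ∧ Even f ∧ Even h ∧
          φ ⟨0,1,0⟩ = ⟨a,e,f⟩ ∧ φ ⟨0,0,1⟩ = ⟨a,h,i⟩) ∨
       (φ ⟨1,0,0⟩ = ⟨-1,0,0⟩ ∧ Odd e ∧ Odd i ∧ Even f ∧ Even h ∧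
          φ ⟨0,1,0⟩ = ⟨a,e,f⟩ ∧ φ ⟨0,0,1⟩ = ⟨a-1,h,i⟩)) := by
  constructor
  · exact M.classify φ
  · rintro ⟨a,e,f,h,i,hdet,hc⟩
    rcases hc with ⟨h1,_,_,_,_,h2,h3⟩|⟨h1,_,_,_,_,h2,h3⟩|⟨h1,_,_,_,_,h2,h3⟩|⟨h1,_,_,_,_,h2,h3⟩
    · exact M.bijective_of φ 1 (Or.inl rfl) (by rw [h2,h3]; simpa using hdet) h1
    · exact M.bijective_of φ (-1) (Or.inr rfl) (by rw [h2,h3]; simpa using hdet) h1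
    · exact M.bijective_of φ 1 (Or.inl rfl) (by rw [h2,h3]; simpa using hdet) h1
    · exact M.bijective_of φ (-1) (Or.inr rfl) (by rw [h2,h3]; simpa using hdet) h1

lemma bij_iff (ψ : G →* G) :
    Function.Bijective ψ ↔ Function.Bijective (Phi.comp (ψ.comp psiHom)) := by
  constructor
  · intro hψ
    have hco : ⇑(Phi.comp (ψ.comp psiHom)) = ⇑Phi ∘ ⇑ψ ∘ psi := rfl
    rw [hco]
    exact Phi_bij.comp (hψ.comp psi_bij)
  · intro hφ
    have hψeq : ⇑ψ = psi ∘ ⇑(Phi.comp (ψ.comp psiHom)) ∘ ⇑Phi := by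
      funext g
      show ψ g = psi (Phi (ψ (psiHom (Phi g))))
      rw [show psiHom (Phi g) = psi (Phi g) from rfl, psi_Phi, psi_Phi]
    rw [hψeq]
    exact psi_bij.comp (hφ.comp Phi_bij)

lemma cond_iff (ψ : G →* G) (v : M) (w : G) (hw : psi v = w) (X Y Z : ℤ) :
    (Phi.comp (ψ.comp psiHom)) v = (⟨X,Y,Z⟩ : M) ↔ ψ w = ga ^ X * gb ^ Y * gc ^ Z := by
  subst hw
  show Phi (ψ (psi v)) = (⟨X,Y,Z⟩ : M) ↔ _
  constructor
  · intro hEq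
    have h2 := congrArg psi hEq
    rw [psi_Phi] at h2
    rw [h2]
    rfl
  · intro hEq
    rw [hEq, PhiNF]

lemma psi_e1 : psi ⟨1,0,0⟩ = ga := by show ga^(1:ℤ)*gb^(0:ℤ)*gc^(0:ℤ) = ga; simp
lemma psi_e2 : psi ⟨0,1,0⟩ = gb := by show ga^(0:ℤ)*gb^(1:ℤ)*gc^(0:ℤ) = gb; simp
lemma psi_e3 : psi ⟨0,0,1⟩ = gc := by show ga^(0:ℤ)*gb^(0:ℤ)*gc^(1:ℤ) = gc; simp

theorem final (ψ : G →* G) :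
    Function.Bijective ψ ↔
      ∃ (a e f h i : ℤ), (e * i - f * h = 1 ∨ e * i - f * h = -1) ∧
        ((ψ ga = ga ∧ Even e ∧ Even i ∧ Odd f ∧ Odd h ∧
            ψ gb = ga ^ a * gb ^ e * gc ^ f ∧
            ψ gc = ga ^ (a + 1) * gb ^ h * gc ^ i) ∨
         (ψ ga = ga⁻¹ ∧ Even e ∧ Even i ∧ Odd f ∧ Odd h ∧
            ψ gb = ga ^ a * gb ^ e * gc ^ f ∧
            ψ gc = ga ^ a * gb ^ h * gc ^ i) ∨
         (ψ ga = ga ∧ Odd e ∧ Odd i ∧ Even f ∧ Even h ∧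
            ψ gb = ga ^ a * gb ^ e * gc ^ f ∧
            ψ gc = ga ^ a * gb ^ h * gc ^ i) ∨
         (ψ ga = ga⁻¹ ∧ Odd e ∧ Odd i ∧ Even f ∧ Even h ∧
            ψ gb = ga ^ a * gb ^ e * gc ^ f ∧
            ψ gc = ga ^ (a - 1) * gb ^ h * gc ^ i)) := by
  have hA1 : ((Phi.comp (ψ.comp psiHom)) ⟨1,0,0⟩ = (⟨1,0,0⟩:M)) ↔ ψ ga = ga := by
    have := cond_iff ψ ⟨1,0,0⟩ ga psi_e1 1 0 0
    rwa [show ga^(1:ℤ)*gb^(0:ℤ)*gc^(0:ℤ) = ga by simp] at this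
  have hA2 : ((Phi.comp (ψ.comp psiHom)) ⟨1,0,0⟩ = (⟨-1,0,0⟩:M)) ↔ ψ ga = ga⁻¹ := by
    have := cond_iff ψ ⟨1,0,0⟩ ga psi_e1 (-1) 0 0
    rwa [show ga^(-1:ℤ)*gb^(0:ℤ)*gc^(0:ℤ) = ga⁻¹ by simp] at this
  have hB : ∀ X e f : ℤ, ((Phi.comp (ψ.comp psiHom)) ⟨0,1,0⟩ = (⟨X,e,f⟩:M)) ↔
      ψ gb = ga ^ X * gb ^ e * gc ^ f := fun X e f => cond_iff ψ ⟨0,1,0⟩ gb psi_e2 X e f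
  have hC : ∀ X h i : ℤ, ((Phi.comp (ψ.comp psiHom)) ⟨0,0,1⟩ = (⟨X,h,i⟩:M)) ↔
      ψ gc = ga ^ X * gb ^ h * gc ^ i := fun X h i => cond_iff ψ ⟨0,0,1⟩ gc psi_e3 X h i
  rw [bij_iff ψ, Mchar (Phi.comp (ψ.comp psiHom))]
  apply exists_congr; intro a
  apply exists_congr; intro e
  apply exists_congr; intro f
  apply exists_congr; intro h
  apply exists_congr; intro i
  apply and_congr Iff.rfl
  apply or_congr
  · exact and_congr hA1 (and_congr Iff.rfl (and_congr Iff.rfl (and_congr Iff.rfl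
      (and_congr Iff.rfl (and_congr (hB a e f) (hC (a+1) h i))))))
  apply or_congr
  · exact and_congr hA2 (and_congr Iff.rfl (and_congr Iff.rfl (and_congr Iff.rfl
      (and_congr Iff.rfl (and_congr (hB a e f) (hC a h i))))))
  apply or_congr
  · exact and_congr hA1 (and_congr Iff.rfl (and_congr Iff.rfl (and_congr Iff.rfl
      (and_congr Iff.rfl (and_congr (hB a e f) (hC a h i))))))
  · exact and_congr hA2 (and_congr Iff.rfl (and_congr Iff.rfl (and_congr Iff.rfl
      (and_congr Iff.rfl (and_congr (hB a e f) (hC (a-1) h i))))))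
end Gside
end PZ

/-- In `G₃ = ⟨g₁, g₂, g₃ ∣ g₂g₁ = g₁⁻¹g₂, g₃g₁ = g₁⁻¹g₃, g₃g₂ = g₁g₂g₃⟩`, a
group homomorphism `ψ : G₃ →* G₃` is an automorphism (i.e. bijective) if and
only if there exist `a, e, f, h, i ∈ ℤ` with `e·i − f·h = ±1` such that
`ψ g₂ = g₁^{d₂} g₂^e g₃^f` and `ψ g₃ = g₁^{d₃} g₂^h g₃^i`, where the parities
and the values of `ψ g₁, d₂, d₃` fall into one of the four families
`α, β, γ, δ`. -/
theorem polyZ_b1_aut_characterization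
    (ψ : PresentedGroup polyZRelsB1 →* PresentedGroup polyZRelsB1) :
    letI G₃ := PresentedGroup polyZRelsB1
    letI g₁ : G₃ := PresentedGroup.of 0
    letI g₂ : G₃ := PresentedGroup.of 1
    letI g₃ : G₃ := PresentedGroup.of 2
    Function.Bijective ψ ↔
      ∃ (a e f h i : ℤ), (e * i - f * h = 1 ∨ e * i - f * h = -1) ∧
        ((ψ g₁ = g₁ ∧ Even e ∧ Even i ∧ Odd f ∧ Odd h ∧
            ψ g₂ = g₁ ^ a * g₂ ^ e * g₃ ^ f ∧
            ψ g₃ = g₁ ^ (a + 1) * g₂ ^ h * g₃ ^ i) ∨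
         (ψ g₁ = g₁⁻¹ ∧ Even e ∧ Even i ∧ Odd f ∧ Odd h ∧
            ψ g₂ = g₁ ^ a * g₂ ^ e * g₃ ^ f ∧
            ψ g₃ = g₁ ^ a * g₂ ^ h * g₃ ^ i) ∨
         (ψ g₁ = g₁ ∧ Odd e ∧ Odd i ∧ Even f ∧ Even h ∧
            ψ g₂ = g₁ ^ a * g₂ ^ e * g₃ ^ f ∧
            ψ g₃ = g₁ ^ a * g₂ ^ h * g₃ ^ i) ∨
         (ψ g₁ = g₁⁻¹ ∧ Odd e ∧ Odd i ∧ Even f ∧ Even h ∧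
            ψ g₂ = g₁ ^ a * g₂ ^ e * g₃ ^ f ∧
            ψ g₃ = g₁ ^ (a - 1) * g₂ ^ h * g₃ ^ i)) := by
  exact PZ.final ψ
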